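/- Let M be a 3×3 complex matrix, and consider the representation of the 3-Kronecker quiver of dimension vector (2,3) whose triple of maps ρ₁, ρ₂, ρ₃ : ℂ² → ℂ³ is given by letting ρ_k(s,t) be the k-th column of the matrix s·I₃ + t·M. This representation is stable if and only if rank(M − λ·I₃) ≥ 2 for every λ ∈ ℂ, i.e., every eigenvalue of M has geometric multiplicity at most 1. -/

import Mathlib

noncomputable section

/-- Stability (for the stability parameter θ = (3,−2)) of a representation `(ρ₁,ρ₂,ρ₃)` of the
3-Kronecker quiver of dimension vector (2,3): for every subrepresentation `(U₁, U₂)` other than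
`(0,0)` and `(ℂ², ℂ³)` one has `3·dim U₁ < 2·dim U₂`. -/
def KStable (ρ : Fin 3 → ((Fin 2 → ℂ) →ₗ[ℂ] (Fin 3 → ℂ))) : Prop :=
  ∀ (U₁ : Submodule ℂ (Fin 2 → ℂ)) (U₂ : Submodule ℂ (Fin 3 → ℂ)),
    (∀ k, U₁.map (ρ k) ≤ U₂) →
    ¬(U₁ = ⊥ ∧ U₂ = ⊥) → ¬(U₁ = ⊤ ∧ U₂ = ⊤) →
    3 * Module.finrank ℂ U₁ < 2 * Module.finrank ℂ U₂

/-- The representation of the 3-Kronecker quiver of dimension vector `(2,3)` associated to a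
3×3 matrix `M`: `ρ_k (s,t)` is the `k`-th column of `s·I₃ + t·M`. -/
def repOfMatrix (M : Matrix (Fin 3) (Fin 3) ℂ) (k : Fin 3) :
    (Fin 2 → ℂ) →ₗ[ℂ] (Fin 3 → ℂ) :=
  (LinearMap.proj (0 : Fin 2) : (Fin 2 → ℂ) →ₗ[ℂ] ℂ).smulRight
      (fun j => (1 : Matrix (Fin 3) (Fin 3) ℂ) j k) +
    (LinearMap.proj (1 : Fin 2) : (Fin 2 → ℂ) →ₗ[ℂ] ℂ).smulRight (fun j => M j k)


open Matrix in
/-- Rank is invariant under scaling by a nonzero scalar. -/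
lemma rank_smul_aux {c : ℂ} (hc : c ≠ 0) (A : Matrix (Fin 3) (Fin 3) ℂ) :
    (c • A).rank = A.rank := by
  have h1 : (c • A) = (c • (1 : Matrix (Fin 3) (Fin 3) ℂ)) * A := by
    rw [Matrix.smul_mul, one_mul]
  have h2 : A = (c⁻¹ • (1 : Matrix (Fin 3) (Fin 3) ℂ)) * (c • A) := by
    rw [Matrix.smul_mul, one_mul, smul_smul, inv_mul_cancel₀ hc, one_smul]
  apply le_antisymm
  · rw [h1]; exact Matrix.rank_mul_le_right _ _
  · conv_lhs => rw [h2]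
    exact Matrix.rank_mul_le_right _ _

open Matrix in
lemma rep_apply (M : Matrix (Fin 3) (Fin 3) ℂ) (k : Fin 3) (v : Fin 2 → ℂ) :
    repOfMatrix M k v = (v 0 • (1 : Matrix (Fin 3) (Fin 3) ℂ) + v 1 • M)ᵀ k := by
  funext j
  simp [repOfMatrix, Matrix.transpose_apply, Matrix.add_apply, Matrix.smul_apply, mul_comm]

/-- The representation `ρ_k (s,t) = (k-th column of s·I₃ + t·M)` of the
3-Kronecker quiver of dimension vector `(2,3)` is stable if and only if
`rank(M − λ·I₃) ≥ 2` for every `λ ∈ ℂ`, i.e. every eigenvalue of `M` has geometric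
multiplicity at most 1. -/
theorem stmt9 (M : Matrix (Fin 3) (Fin 3) ℂ) :
    KStable (repOfMatrix M) ↔
      ∀ lam : ℂ, 2 ≤ (M - lam • (1 : Matrix (Fin 3) (Fin 3) ℂ)).rank := by
  constructor
  · intro hs lam
    set A := M - lam • (1 : Matrix (Fin 3) (Fin 3) ℂ) with hA
    set u : Fin 2 → ℂ := ![-lam, 1] with hu
    have hu0 : u ≠ 0 := by
      intro h
      have := congrFun h 1
      simp [hu] at this
    have hAu : A = u 0 • (1 : Matrix (Fin 3) (Fin 3) ℂ) + u 1 • M := by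
      simp [hA, hu]
      module
    set U₁ : Submodule ℂ (Fin 2 → ℂ) := Submodule.span ℂ {u} with hU₁
    set U₂ : Submodule ℂ (Fin 3 → ℂ) := LinearMap.range A.mulVecLin with hU₂
    have hmap : ∀ k, U₁.map (repOfMatrix M k) ≤ U₂ := by
      intro k
      rw [hU₁, Submodule.map_span, Set.image_singleton, Submodule.span_le,
        Set.singleton_subset_iff]
      rw [hU₂, SetLike.mem_coe, Matrix.range_mulVecLin]
      apply Submodule.subset_span
      exact ⟨k, by rw [rep_apply, ← hAu]; rfl⟩
    have hne1 : ¬(U₁ = ⊥ ∧ U₂ = ⊥) := by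
      rintro ⟨h1, -⟩
      exact hu0 (by simpa [hU₁, Submodule.span_singleton_eq_bot] using h1)
    have hd1 : Module.finrank ℂ U₁ = 1 := finrank_span_singleton hu0
    have hne2 : ¬(U₁ = ⊤ ∧ U₂ = ⊤) := by
      rintro ⟨h1, -⟩
      rw [h1] at hd1
      simp [finrank_top, Module.finrank_fin_fun] at hd1
    have := hs U₁ U₂ hmap hne1 hne2
    rw [hd1] at this
    have hr : A.rank = Module.finrank ℂ U₂ := rfl
    omega
  · intro h U₁ U₂ hmap h0 h1
    by_cases hb : U₁ = ⊥
    · subst hb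
      have h2 : U₂ ≠ ⊥ := fun he => h0 ⟨rfl, he⟩
      have h3 : Module.finrank ℂ U₂ ≠ 0 := fun he => h2 (Submodule.finrank_eq_zero.mp he)
      simp only [finrank_bot]
      omega
    · obtain ⟨v, hv, hv0⟩ := Submodule.exists_mem_ne_zero_of_ne_bot hb
      set A := v 0 • (1 : Matrix (Fin 3) (Fin 3) ℂ) + v 1 • M with hA
      have hcol : ∀ k, A.transpose k ∈ U₂ := fun k =>
        hmap k (Submodule.mem_map.mpr ⟨v, hv, rep_apply M k v⟩)
      have hrank : 2 ≤ A.rank := by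
        by_cases ht : v 1 = 0
        · have hs0 : v 0 ≠ 0 := by
            intro h0'
            apply hv0
            funext i
            fin_cases i <;> simp [h0', ht]
          have hA1 : A = v 0 • (1 : Matrix (Fin 3) (Fin 3) ℂ) := by
            rw [hA, ht, zero_smul, add_zero]
          rw [hA1, rank_smul_aux hs0, Matrix.rank_one]
          simp
        · have hvl : v 1 * (-(v 0) / v 1) = -(v 0) := by field_simp
          have hA2 : A = v 1 • (M - (-(v 0) / v 1) • (1 : Matrix (Fin 3) (Fin 3) ℂ)) := by
            rw [smul_sub, smul_smul, hvl, neg_smul, sub_neg_eq_add, add_comm, hA]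
          rw [hA2, rank_smul_aux ht]
          exact h _
      have hle : A.rank ≤ Module.finrank ℂ U₂ := by
        have : A.rank = Module.finrank ℂ (LinearMap.range A.mulVecLin) := rfl
        rw [this, Matrix.range_mulVecLin]
        exact Submodule.finrank_mono
          (Submodule.span_le.mpr (Set.range_subset_iff.mpr hcol))
      have hd1 : Module.finrank ℂ U₁ ≤ 2 := by
        have := Submodule.finrank_le U₁
        simpa [Module.finrank_fin_fun] using this
      rcases Nat.lt_or_ge (Module.finrank ℂ U₁) 2 with hlt | hge
      · omega
      · exfalso
        have htop : U₁ = ⊤ := Submodule.eq_top_of_finrank_eq (by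
          have : Module.finrank ℂ U₁ = 2 := le_antisymm hd1 hge
          simp [this, Module.finrank_fin_fun])
        apply h1
        refine ⟨htop, ?_⟩
        rw [eq_top_iff]
        intro x _
        have hsingle : ∀ k : Fin 3, Pi.single k (1:ℂ) ∈ U₂ := by
          intro k
          have hmem : repOfMatrix M k (Pi.single 0 (1:ℂ)) ∈ U₂ :=
            hmap k (Submodule.mem_map.mpr ⟨Pi.single 0 1, htop ▸ Submodule.mem_top, rfl⟩)
          have heq : repOfMatrix M k (Pi.single 0 (1:ℂ)) = Pi.single k 1 := by
            funext j
            simp [repOfMatrix, Matrix.one_apply, Pi.single_apply, eq_comm]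
          rwa [heq] at hmem
        have hx : x = ∑ k : Fin 3, x k • (Pi.single k 1 : Fin 3 → ℂ) := by
          funext j
          simp [Pi.single_apply, Finset.sum_ite_eq', mul_comm]
        rw [hx]
        exact Submodule.sum_mem _ fun k _ => Submodule.smul_mem _ _ (hsingle k)
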